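/- Let c, d > 0 and define E : ℂ² → ℝ by E(ψ₁, ψ₂) = (c/(2π))·((|ψ₁|² + |ψ₂|² - πd/c)² - π²d²/c² + (1/2)|ψ₁² + ψ₂²|²). Then min E = -πd²/(2c) and the set of minimizers equals {(ψ, ±iψ) : ψ ∈ ℂ, |ψ|² = πd/(2c)}. -/

import Mathlib

theorem stmt9 (c d : ℝ) (hc : 0 < c) (hd : 0 < d)
    (E : ℂ → ℂ → ℝ)
    (hE : ∀ ψ₁ ψ₂, E ψ₁ ψ₂ = (c/(2*Real.pi)) *
      ((‖ψ₁‖^2 + ‖ψ₂‖^2 - Real.pi*d/c)^2 - Real.pi^2*d^2/c^2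
        + (1/2) * ‖ψ₁^2 + ψ₂^2‖^2)) :
    IsLeast {x : ℝ | ∃ ψ₁ ψ₂, x = E ψ₁ ψ₂} (-(Real.pi*d^2/(2*c))) ∧
    ∀ ψ₁ ψ₂, E ψ₁ ψ₂ = -(Real.pi*d^2/(2*c)) ↔
      ∃ ψ : ℂ, ‖ψ‖^2 = Real.pi*d/(2*c) ∧
        ((ψ₁ = ψ ∧ ψ₂ = Complex.I*ψ) ∨ (ψ₁ = ψ ∧ ψ₂ = -(Complex.I*ψ))) := by
  have hπ : (0:ℝ) < Real.pi := Real.pi_pos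
  have hc' : c ≠ 0 := ne_of_gt hc
  have hπ' : Real.pi ≠ 0 := ne_of_gt hπ
  have hpos : 0 < c/(2*Real.pi) := by positivity
  have hE' : ∀ ψ₁ ψ₂ : ℂ, E ψ₁ ψ₂ = (c/(2*Real.pi)) *
      ((‖ψ₁‖^2 + ‖ψ₂‖^2 - Real.pi*d/c)^2
        + (1/2) * ‖ψ₁^2 + ψ₂^2‖^2) - Real.pi*d^2/(2*c) := by
    intro ψ₁ ψ₂
    rw [hE]
    field_simp
    ring
  -- equality characterization in terms of the two conditions
  have hchar : ∀ ψ₁ ψ₂ : ℂ, E ψ₁ ψ₂ = -(Real.pi*d^2/(2*c)) ↔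
      (‖ψ₁‖^2 + ‖ψ₂‖^2 = Real.pi*d/c ∧ ψ₁^2 + ψ₂^2 = 0) := by
    intro ψ₁ ψ₂
    rw [hE']
    constructor
    · intro h
      have h0 : (c/(2*Real.pi)) *
          ((‖ψ₁‖^2 + ‖ψ₂‖^2 - Real.pi*d/c)^2
            + (1/2) * ‖ψ₁^2 + ψ₂^2‖^2) = 0 := by linarith
      have h1 : (‖ψ₁‖^2 + ‖ψ₂‖^2 - Real.pi*d/c)^2
            + (1/2) * ‖ψ₁^2 + ψ₂^2‖^2 = 0 := by
        rcases mul_eq_zero.mp h0 with h | h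
        · exact absurd h (ne_of_gt hpos)
        · exact h
      have hs1 : (‖ψ₁‖^2 + ‖ψ₂‖^2 - Real.pi*d/c)^2 = 0 := by
        nlinarith [sq_nonneg (‖ψ₁^2 + ψ₂^2‖),
          sq_nonneg (‖ψ₁‖^2 + ‖ψ₂‖^2 - Real.pi*d/c)]
      have hs2 : (‖ψ₁^2 + ψ₂^2‖)^2 = 0 := by
        nlinarith [sq_nonneg (‖ψ₁^2 + ψ₂^2‖)]
      constructor
      · have := pow_eq_zero_iff (n := 2) (by norm_num) |>.mp hs1
        linarith [sub_eq_zero.mp this]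
      · have := pow_eq_zero_iff (n := 2) (by norm_num) |>.mp hs2
        exact norm_eq_zero.mp this
    · rintro ⟨h1, h2⟩
      rw [h2]
      simp [h1]
  constructor
  · constructor
    · -- membership: exhibit a minimizer
      refine ⟨(Real.sqrt (Real.pi*d/(2*c)) : ℂ), Complex.I * (Real.sqrt (Real.pi*d/(2*c)) : ℂ), ?_⟩
      have habs : ‖((Real.sqrt (Real.pi*d/(2*c)) : ℂ))‖^2 = Real.pi*d/(2*c) := by
        rw [Complex.norm_of_nonneg (Real.sqrt_nonneg _),
          Real.sq_sqrt (by positivity)]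
      have h2 : ((Real.sqrt (Real.pi*d/(2*c)) : ℂ))^2
          + (Complex.I * (Real.sqrt (Real.pi*d/(2*c)) : ℂ))^2 = 0 := by
        linear_combination ((Real.sqrt (Real.pi*d/(2*c)) : ℂ))^2 * Complex.I_sq
      have h1 : ‖((Real.sqrt (Real.pi*d/(2*c)) : ℂ))‖^2
          + ‖Complex.I * (Real.sqrt (Real.pi*d/(2*c)) : ℂ)‖^2 = Real.pi*d/c := by
        rw [norm_mul, Complex.norm_I, one_mul, habs]
        field_simp
        ring
      exact ((hchar _ _).mpr ⟨h1, h2⟩).symm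
    · rintro x ⟨ψ₁, ψ₂, rfl⟩
      rw [hE']
      have hnn : 0 ≤ (c/(2*Real.pi)) *
          ((‖ψ₁‖^2 + ‖ψ₂‖^2 - Real.pi*d/c)^2
            + (1/2) * ‖ψ₁^2 + ψ₂^2‖^2) := by positivity
      linarith
  · intro ψ₁ ψ₂
    rw [hchar]
    constructor
    · rintro ⟨h1, h2⟩
      have hfac : (ψ₂ - Complex.I*ψ₁) * (ψ₂ + Complex.I*ψ₁) = 0 := by
        linear_combination h2 - ψ₁^2 * Complex.I_sq
      have habs12 : ‖ψ₂‖ = ‖ψ₁‖ := by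
        rcases mul_eq_zero.mp hfac with h | h
        · rw [sub_eq_zero] at h
          rw [h, norm_mul, Complex.norm_I, one_mul]
        · have hh : ψ₂ = -(Complex.I*ψ₁) := by linear_combination h
          rw [hh, norm_neg, norm_mul, Complex.norm_I, one_mul]
      have habs : ‖ψ₁‖^2 = Real.pi*d/(2*c) := by
        rw [habs12] at h1
        field_simp at h1 ⊢
        linarith
      refine ⟨ψ₁, habs, ?_⟩
      rcases mul_eq_zero.mp hfac with h | h
      · left
        exact ⟨rfl, by linear_combination h⟩
      · right
        exact ⟨rfl, by linear_combination h⟩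
    · rintro ⟨ψ, habs, ⟨rfl, rfl⟩ | ⟨rfl, rfl⟩⟩
      · constructor
        · rw [norm_mul, Complex.norm_I, one_mul, habs]
          field_simp
          ring
        · linear_combination ψ₁^2 * Complex.I_sq
      · constructor
        · rw [norm_neg, norm_mul, Complex.norm_I, one_mul, habs]
          field_simp
          ring
        · linear_combination ψ₁^2 * Complex.I_sq
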